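/- Lipschitz continuity of the regularized best-response map: let A ⊆ ℝ^m be a nonempty compact convex set, c > 0, and let ψ : ℝ^m × ℝ^m → ℝ be continuously differentiable with L-Lipschitz gradient and such that y ↦ ψ(x,y) is concave for every x. For each x let y*(x) denote the unique maximizer of y ↦ ψ(x,y) − (c/2)‖x − y‖² over A. Then for all x₁, x₂ ∈ ℝ^m, ‖y*(x₁) − y*(x₂)‖ ≤ (L_c / c) ‖x₁ − x₂‖, where L_c is any Lipschitz constant of the gradient of the regularized function ψ_c(x,y) = ψ(x,y) − (c/2)‖x − y‖². -/

import Mathlib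

open RealInnerProductSpace

section Aux
variable {E : Type*} [NormedAddCommGroup E] [InnerProductSpace ℝ E] [CompleteSpace E]

lemma aux_grad_sq (x y₀ : E) :
    HasGradientAt (fun y => ‖x - y‖ ^ 2) ((2:ℝ) • y₀ - (2:ℝ) • x) y₀ := by
  rw [hasGradientAt_iff_isLittleO]
  have h : ∀ y : E, ‖x - y‖ ^ 2 - ‖x - y₀‖ ^ 2 - ⟪(2:ℝ) • y₀ - (2:ℝ) • x, y - y₀⟫ =
      ‖y - y₀‖ ^ 2 := by
    intro y
    have hx : x - y = (x - y₀) - (y - y₀) := by abel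
    rw [hx, norm_sub_sq_real]
    simp only [inner_sub_left, real_inner_smul_left]
    ring
  have heq : (fun y : E => ‖x - y‖ ^ 2 - ‖x - y₀‖ ^ 2 - ⟪(2:ℝ) • y₀ - (2:ℝ) • x, y - y₀⟫)
      = fun y => ‖y - y₀‖ ^ 2 := funext h
  rw [heq]
  rw [Asymptotics.isLittleO_iff]
  intro ε hε
  filter_upwards [Metric.ball_mem_nhds y₀ hε] with y hy
  rw [Metric.mem_ball, dist_eq_norm] at hy
  have : ‖y - y₀‖ ^ 2 ≤ ε * ‖y - y₀‖ := by nlinarith [norm_nonneg (y - y₀)]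
  simpa [abs_of_nonneg (sq_nonneg ‖y - y₀‖)] using this

lemma aux_grad_smul (r : ℝ) {f : E → ℝ} {g x : E} (h : HasGradientAt f g x) :
    HasGradientAt (fun y => r * f y) (r • g) x := by
  rw [hasGradientAt_iff_hasFDerivAt] at h ⊢
  have := h.const_mul r
  have e : (InnerProductSpace.toDual ℝ E) (r • g) = r • (InnerProductSpace.toDual ℝ E) g := by
    ext z
    simp [inner_smul_left, mul_comm]
  rw [e]
  exact this

lemma aux_grad_sub {f₁ f₂ : E → ℝ} {g₁ g₂ x : E} (h₁ : HasGradientAt f₁ g₁ x)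
    (h₂ : HasGradientAt f₂ g₂ x) :
    HasGradientAt (fun y => f₁ y - f₂ y) (g₁ - g₂) x := by
  rw [hasGradientAt_iff_hasFDerivAt] at h₁ h₂ ⊢
  have := h₁.sub h₂
  have e : (InnerProductSpace.toDual ℝ E) (g₁ - g₂)
      = (InnerProductSpace.toDual ℝ E) g₁ - (InnerProductSpace.toDual ℝ E) g₂ := by
    ext z
    simp [inner_sub_left]
  rw [e]
  exact this

lemma aux_first_order {A : Set E} (hA_cvx : Convex ℝ A) {f : E → ℝ} {g a : E}
    (hg : HasGradientAt f g a) (ha : a ∈ A) (hmax : ∀ y ∈ A, f y ≤ f a)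
    {y : E} (hy : y ∈ A) : ⟪g, y - a⟫ ≤ 0 := by
  have hloc : IsLocalMaxOn f A a := (isMaxOn_iff.mpr hmax).localize
  have hcone : y - a ∈ posTangentConeAt A a :=
    sub_mem_posTangentConeAt_of_segment_subset (hA_cvx.segment_subset ha hy)
  have := hloc.hasFDerivWithinAt_nonpos
    ((hasGradientAt_iff_hasFDerivAt.mp hg).hasFDerivWithinAt) hcone
  simpa using this

lemma aux_concave_grad {f : E → ℝ} (hf : ConcaveOn ℝ Set.univ f) {x g : E}
    (hg : HasGradientAt f g x) (y : E) : f y ≤ f x + ⟪g, y - x⟫ := by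
  have hline : ∀ t : ℝ, HasDerivAt (fun t : ℝ => x + t • (y - x)) (y - x) t := by
    intro t
    simpa using ((hasDerivAt_id t).smul_const (y - x)).const_add x
  set φ : ℝ → ℝ := fun t => f (x + t • (y - x)) with hφ
  have hφconc : ConcaveOn ℝ Set.univ φ := by
    have h := hf.comp_affineMap (AffineMap.lineMap x y : ℝ →ᵃ[ℝ] E)
    have hfun : φ = f ∘ (AffineMap.lineMap x y : ℝ →ᵃ[ℝ] E) := by
      funext t
      simp only [φ, Function.comp_apply, AffineMap.lineMap_apply, vsub_eq_sub, vadd_eq_add]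
      rw [add_comm]
    rw [hfun]
    simpa using h
  have hφderiv : HasDerivAt φ ⟪g, y - x⟫ 0 := by
    have h0 : HasDerivAt (fun t : ℝ => x + t • (y - x)) (y - x) 0 := hline 0
    have hgfd : HasFDerivAt f ((InnerProductSpace.toDual ℝ E) g) (x + (0:ℝ) • (y - x)) := by
      simpa using hasGradientAt_iff_hasFDerivAt.mp hg
    have := hgfd.comp_hasDerivAt 0 h0
    simp at this
    exact this
  have hslope := (hφconc.neg.le_slope_of_hasDerivAt (Set.mem_univ (0:ℝ))
    (Set.mem_univ (1:ℝ)) one_pos hφderiv.neg)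
  have hφ0 : φ 0 = f x := by simp [φ]
  have hφ1 : φ 1 = f y := by simp [φ]
  rw [slope_def_field] at hslope
  simp only [Pi.neg_apply, hφ0, hφ1] at hslope
  have : -⟪g, y - x⟫ ≤ (-(f y) - -(f x)) / (1 - 0) := hslope
  linarith [this]

end Aux

/-- Lipschitz continuity of the regularized best-response map: with
`A ⊆ ℝ^m` nonempty compact convex, `c > 0`, `ψ` continuously differentiable with
`L`-Lipschitz gradient and concave in `y`, let `y*(x)` be the unique maximizer over `A`
of `y ↦ ψ(x,y) - (c/2)‖x-y‖²`. If `L_c` is a Lipschitz constant of the gradient of the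
regularized objective `ψ_c(x,y) = ψ(x,y) - (c/2)‖x-y‖²` (whose partial gradients are
`∇ₓψ - c(x-y)` and `∇ᵧψ + c(x-y)`), then `‖y*(x₁) - y*(x₂)‖ ≤ (L_c/c)‖x₁ - x₂‖`. -/
theorem regularized_best_response_lipschitz
    (m : ℕ)
    (A : Set (EuclideanSpace ℝ (Fin m)))
    (hA_ne : A.Nonempty) (hA_cpt : IsCompact A) (hA_cvx : Convex ℝ A)
    (c : ℝ) (hc : 0 < c)
    (ψ : EuclideanSpace ℝ (Fin m) → EuclideanSpace ℝ (Fin m) → ℝ)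
    (gx gy : EuclideanSpace ℝ (Fin m) → EuclideanSpace ℝ (Fin m) → EuclideanSpace ℝ (Fin m))
    (hgx : ∀ x y, HasGradientAt (fun x' => ψ x' y) (gx x y) x)
    (hgy : ∀ x y, HasGradientAt (fun y' => ψ x y') (gy x y) y)
    (L : ℝ) (hL : 0 < L)
    -- `L`-Lipschitz continuity of the joint gradient of `ψ`:
    (hLip : ∀ x₁ y₁ x₂ y₂,
      ‖gx x₁ y₁ - gx x₂ y₂‖ ^ 2 + ‖gy x₁ y₁ - gy x₂ y₂‖ ^ 2
        ≤ L ^ 2 * (‖x₁ - x₂‖ ^ 2 + ‖y₁ - y₂‖ ^ 2))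
    (hccv : ∀ x, ConcaveOn ℝ Set.univ (fun y => ψ x y))
    (Lc : ℝ) (hLc : 0 ≤ Lc)
    -- `L_c` is a Lipschitz constant of the joint gradient of the regularized objective
    -- `ψ_c(x,y) = ψ(x,y) - (c/2)‖x-y‖²`:
    (hLipc : ∀ x₁ y₁ x₂ y₂,
      ‖(gx x₁ y₁ - c • (x₁ - y₁)) - (gx x₂ y₂ - c • (x₂ - y₂))‖ ^ 2
          + ‖(gy x₁ y₁ + c • (x₁ - y₁)) - (gy x₂ y₂ + c • (x₂ - y₂))‖ ^ 2
        ≤ Lc ^ 2 * (‖x₁ - x₂‖ ^ 2 + ‖y₁ - y₂‖ ^ 2))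
    (ystar : EuclideanSpace ℝ (Fin m) → EuclideanSpace ℝ (Fin m))
    (hystar : ∀ x, ystar x ∈ A ∧ ∀ y ∈ A,
      ψ x y - c / 2 * ‖x - y‖ ^ 2 ≤ ψ x (ystar x) - c / 2 * ‖x - ystar x‖ ^ 2) :
    ∀ x₁ x₂, ‖ystar x₁ - ystar x₂‖ ≤ (Lc / c) * ‖x₁ - x₂‖ := by
  intro x₁ x₂
  set y₁ := ystar x₁ with hy₁
  set y₂ := ystar x₂ with hy₂
  set d := y₁ - y₂ with hd
  -- gradient of the regularized objective in y
  have hobj : ∀ x y₀, HasGradientAt (fun y => ψ x y - c / 2 * ‖x - y‖ ^ 2)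
      (gy x y₀ + c • (x - y₀)) y₀ := by
    intro x y₀
    have h3 := aux_grad_sub (hgy x y₀) (aux_grad_smul (c / 2) (aux_grad_sq x y₀))
    convert h3 using 1
    module
  -- first-order optimality
  have hfo : ∀ x y, y ∈ A →
      ⟪gy x (ystar x) + c • (x - ystar x), y - ystar x⟫ ≤ 0 := by
    intro x y hy
    exact aux_first_order hA_cvx (hobj x (ystar x)) (hystar x).1 (hystar x).2 hy
  have h1 := hfo x₁ y₂ (hystar x₂).1
  have h2 := hfo x₂ y₁ (hystar x₁).1
  -- monotonicity of gy in y (concavity)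
  have hm1 := aux_concave_grad (hccv x₂) (hgy x₂ y₁) y₂
  have hm2 := aux_concave_grad (hccv x₂) (hgy x₂ y₂) y₁
  have e1 : y₂ - y₁ = -d := by rw [hd]; abel
  have hW : ⟪gy x₂ y₁ - gy x₂ y₂, d⟫ ≤ 0 := by
    rw [inner_sub_left]
    rw [e1, inner_neg_right] at hm1
    rw [← hd] at hm2
    linarith
  -- bound on the x-shift of the regularized gradient
  set V := (gy x₁ y₁ + c • (x₁ - y₁)) - (gy x₂ y₁ + c • (x₂ - y₁)) with hV
  have hVn : ‖V‖ ≤ Lc * ‖x₁ - x₂‖ := by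
    have hVsq := hLipc x₁ y₁ x₂ y₁
    simp only [sub_self, norm_zero, ne_eq, OfNat.ofNat_ne_zero, not_false_eq_true,
      zero_pow, add_zero] at hVsq
    have h0 : ‖V‖ ^ 2 ≤ (Lc * ‖x₁ - x₂‖) ^ 2 := by
      rw [hV, mul_pow]
      nlinarith [hVsq, sq_nonneg ‖(gx x₁ y₁ - c • (x₁ - y₁)) - (gx x₂ y₁ - c • (x₂ - y₁))‖]
    exact le_of_pow_le_pow_left₀ two_ne_zero (by positivity) h0
  have hVd : ⟪V, d⟫ ≤ Lc * ‖x₁ - x₂‖ * ‖d‖ :=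
    le_trans (real_inner_le_norm V d) (mul_le_mul_of_nonneg_right hVn (norm_nonneg d))
  -- decomposition
  have hdec : (gy x₁ y₁ + c • (x₁ - y₁)) - (gy x₂ y₂ + c • (x₂ - y₂))
      = V + (gy x₂ y₁ - gy x₂ y₂) - c • d := by
    rw [hV, hd]; module
  have hG : 0 ≤ ⟪(gy x₁ y₁ + c • (x₁ - y₁)) - (gy x₂ y₂ + c • (x₂ - y₂)), d⟫ := by
    rw [inner_sub_left]
    rw [e1, inner_neg_right] at h1
    rw [← hd] at h2
    linarith
  have key : c * ‖d‖ ^ 2 ≤ Lc * ‖x₁ - x₂‖ * ‖d‖ := by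
    rw [hdec, inner_sub_left, inner_add_left, real_inner_smul_left,
      real_inner_self_eq_norm_sq] at hG
    linarith
  rcases eq_or_lt_of_le (norm_nonneg d) with hd0 | hd0
  · rw [← hd0]
    positivity
  · rw [div_mul_eq_mul_div, le_div_iff₀ hc]
    nlinarith [key, hd0]
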